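/- For every r₀ ∈ (0,1) there exists C > 0 such that the following holds for every p: for all m ≥ 2, all r ∈ [r₀, 1 − r₀], all c ∈ (0, r₀/2), and all (β¹, …, β^m) ∈ 𝒮(m, c, r), setting a = (1/m) Σ_{i=1}^m βⁱ and ã = √p · a/‖a‖, one has |(βⁱ − a)ᵀ ã| ≤ C·p·c for every i ∈ {1, …, m}. -/
import Mathlib


open scoped BigOperators

noncomputable section

namespace TAPReg

/-- Squared Euclidean norm of a vector in `ℝ^k`. -/
def normSq {k : ℕ} (x : Fin k → ℝ) : ℝ := ∑ i, x i ^ 2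

/-- Euclidean inner product on `ℝ^k`. -/
def dotp {k : ℕ} (x y : Fin k → ℝ) : ℝ := ∑ i, x i * y i

/-- The overlap-constrained set `𝒮(m, c, r)` of `m`-tuples of points on the sphere
`S^{p-1}(√p)` whose pairwise overlaps are within `c` of `r`. -/
def SSet (p m : ℕ) (c r : ℝ) : Set (Fin m → Fin p → ℝ) :=
  {B | (∀ i, normSq (B i) = p) ∧
       ∀ i j, i ≠ j → |dotp (B i) (B j) / p - r| ≤ c}

/-- The sample mean `a = (1/m) Σᵢ βⁱ` of an `m`-tuple of vectors. -/
def avg {p m : ℕ} (B : Fin m → Fin p → ℝ) : Fin p → ℝ :=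
  fun j => (∑ i, B i j) / m

lemma normSq_eq_dotp {k : ℕ} (x : Fin k → ℝ) : normSq x = dotp x x := by
  simp [normSq, dotp, sq]

lemma dotp_comm {k : ℕ} (x y : Fin k → ℝ) : dotp x y = dotp y x := by
  simp [dotp, mul_comm]

lemma dotp_avg_right {p m : ℕ} (x : Fin p → ℝ) (B : Fin m → Fin p → ℝ) :
    dotp x (avg B) = (∑ i, dotp x (B i)) / m := by
  simp only [dotp, avg, ← mul_div_assoc, Finset.mul_sum, ← Finset.sum_div]
  rw [Finset.sum_comm]

/-- **Lemma 3.7.** For every `r₀ ∈ (0,1)` there exists `C > 0` such that for all `p`,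
all `m ≥ 2`, all `r ∈ [r₀, 1 − r₀]`, all `c ∈ (0, r₀/2)` and all
`(β¹, …, β^m) ∈ 𝒮(m, c, r)`, setting `a = (1/m) Σᵢ βⁱ` and `ã = √p · a/‖a‖`, one has
`|(βⁱ − a)ᵀ ã| ≤ C p c` for every `i`. -/
theorem centered_replica_orthogonality (r₀ : ℝ) (hr₀ : r₀ ∈ Set.Ioo (0 : ℝ) 1) :
    ∃ C : ℝ, 0 < C ∧ ∀ (p m : ℕ), 2 ≤ m →
      ∀ r ∈ Set.Icc r₀ (1 - r₀), ∀ c ∈ Set.Ioo (0 : ℝ) (r₀ / 2),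
      ∀ B ∈ SSet p m c r, ∀ i : Fin m,
        |dotp (fun j => B i j - avg B j)
            ((Real.sqrt p / Real.sqrt (normSq (avg B))) • avg B)|
          ≤ C * p * c := by
  obtain ⟨hr₀0, hr₀1⟩ := hr₀
  refine ⟨2 * Real.sqrt (2 / r₀), by positivity, ?_⟩
  intro p m hm r hr c hc B hB i
  rcases Nat.eq_zero_or_pos p with hp | hp
  · subst hp
    simp [dotp]
  obtain ⟨hsph, hover⟩ := hB
  obtain ⟨hc0, hc1⟩ := hc
  obtain ⟨hrl, hrr⟩ := hr
  have hP0 : (0:ℝ) < (p:ℝ) := by exact_mod_cast hp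
  have hM2 : (2:ℝ) ≤ (m:ℝ) := by exact_mod_cast hm
  set P : ℝ := (p : ℝ) with hP
  set M : ℝ := (m : ℝ) with hM
  have hM0 : (0:ℝ) < M := by linarith
  set q : Fin m → Fin m → ℝ := fun i j => dotp (B i) (B j) with hq
  have hdiag : ∀ i, q i i = P := by
    intro i
    simp only [hq]
    rw [← normSq_eq_dotp]
    exact_mod_cast hsph i
  have hoff : ∀ i j, i ≠ j → |q i j - P * r| ≤ P * c := by
    intro i j hij
    have h := hover i j hij
    have heq : q i j - P * r = P * (q i j / P - r) := by field_simp
    rw [heq, abs_mul, abs_of_pos hP0]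
    exact mul_le_mul_of_nonneg_left h hP0.le
  set K : ℝ := (P + (M - 1) * P * r) / M with hK
  set D : Fin m → ℝ := fun i => dotp (B i) (avg B) with hD
  have hcastm : ((m - 1 : ℕ) : ℝ) = M - 1 := by
    rw [Nat.cast_sub (by omega : 1 ≤ m)]; simp [hM]
  have hDK : ∀ i, |D i - K| ≤ P * c := by
    intro i
    have hcard : (Finset.univ.erase i).card = m - 1 := by
      rw [Finset.card_erase_of_mem (Finset.mem_univ i), Finset.card_univ, Fintype.card_fin]
    have hsplit : ∑ j, q i j = P + ∑ j ∈ Finset.univ.erase i, q i j := by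
      rw [← Finset.add_sum_erase _ _ (Finset.mem_univ i), hdiag i]
    have hbd : |∑ j ∈ Finset.univ.erase i, (q i j - P * r)| ≤ (M - 1) * (P * c) := by
      calc |∑ j ∈ Finset.univ.erase i, (q i j - P * r)|
          ≤ ∑ j ∈ Finset.univ.erase i, |q i j - P * r| := Finset.abs_sum_le_sum_abs _ _
        _ ≤ ∑ _j ∈ Finset.univ.erase i, P * c := by
            refine Finset.sum_le_sum fun j hj => ?_
            exact hoff i j (Ne.symm (Finset.ne_of_mem_erase hj))
        _ = ((m - 1 : ℕ) : ℝ) * (P * c) := by rw [Finset.sum_const, hcard, nsmul_eq_mul]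
        _ = (M - 1) * (P * c) := by rw [hcastm]
    have hsum2 : ∑ j ∈ Finset.univ.erase i, (q i j - P * r)
        = (∑ j, q i j) - P - (M - 1) * (P * r) := by
      rw [Finset.sum_sub_distrib, Finset.sum_const, hcard, nsmul_eq_mul, hcastm,
        Finset.sum_erase_eq_sub (Finset.mem_univ i), hdiag i]
    have hDval : D i = (∑ j, q i j) / M := dotp_avg_right _ _
    have hdiff : D i - K = (∑ j ∈ Finset.univ.erase i, (q i j - P * r)) / M := by
      rw [hsum2, hDval, hK]
      field_simp
      ring
    rw [hdiff, abs_div, abs_of_pos hM0, div_le_iff₀ hM0]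
    nlinarith [hbd, mul_pos hP0 hc0]
  set N : ℝ := normSq (avg B) with hN
  have hNval : N = (∑ i, D i) / M := by
    rw [hN, normSq_eq_dotp, dotp_avg_right]
    congr 1
    exact Finset.sum_congr rfl fun j _ => dotp_comm _ _
  have hNK : |N - K| ≤ P * c := by
    have hdiff : N - K = (∑ i, (D i - K)) / M := by
      rw [hNval, Finset.sum_sub_distrib, Finset.sum_const, Finset.card_univ,
        Fintype.card_fin, nsmul_eq_mul, ← hM]
      field_simp
    rw [hdiff, abs_div, abs_of_pos hM0, div_le_iff₀ hM0]
    calc |∑ i, (D i - K)| ≤ ∑ i, |D i - K| := Finset.abs_sum_le_sum_abs _ _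
      _ ≤ ∑ _i : Fin m, P * c := Finset.sum_le_sum fun i _ => hDK i
      _ = M * (P * c) := by rw [Finset.sum_const, Finset.card_univ, Fintype.card_fin,
            nsmul_eq_mul, ← hM]
      _ = P * c * M := by ring
  have hDN : |D i - N| ≤ 2 * (P * c) := by
    have h1 := abs_sub_le (D i) K N
    have h2 : |K - N| = |N - K| := abs_sub_comm _ _
    have h3 := hDK i
    linarith [hNK, h2 ▸ h1]
  have hKlb : P * r₀ ≤ K := by
    rw [hK, le_div_iff₀ hM0]
    nlinarith [mul_le_mul_of_nonneg_left hrl (by nlinarith : (0:ℝ) ≤ (M - 1) * P)]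
  have hNlb : P * r₀ / 2 ≤ N := by
    have h1 : P * c ≤ P * (r₀ / 2) := mul_le_mul_of_nonneg_left hc1.le hP0.le
    have h2 := (abs_le.mp hNK).1
    linarith
  have hN0 : (0:ℝ) < N := lt_of_lt_of_le (by positivity) hNlb
  set t : ℝ := Real.sqrt P / Real.sqrt N with ht
  have ht0 : 0 ≤ t := by positivity
  have htle : t ≤ Real.sqrt (2 / r₀) := by
    rw [ht, ← Real.sqrt_div hP0.le]
    apply Real.sqrt_le_sqrt
    rw [div_le_div_iff₀ hN0 hr₀0]
    linarith [mul_le_mul_of_nonneg_left hNlb (by norm_num : (0:ℝ) ≤ 2)]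
  have hkey : dotp (fun j => B i j - avg B j) (t • avg B) = t * (D i - N) := by
    simp only [dotp, Pi.smul_apply, smul_eq_mul, hD, hN, normSq]
    rw [mul_sub, Finset.mul_sum, Finset.mul_sum, ← Finset.sum_sub_distrib]
    exact Finset.sum_congr rfl fun j _ => by ring
  rw [hkey, abs_mul, abs_of_nonneg ht0]
  calc t * |D i - N| ≤ Real.sqrt (2 / r₀) * (2 * (P * c)) :=
        mul_le_mul htle hDN (abs_nonneg _) (Real.sqrt_nonneg _)
    _ = 2 * Real.sqrt (2 / r₀) * P * c := by ring

end TAPReg
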